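/- First-order condition for the dual problem: let y > 0, z ∈ ℝ, and let ξ be a nonnegative F-measurable random variable with E[ξ·H] < ∞. Define F(u) := u·y·z + E[Ũ(u·y·ξ(·), ·)] for u > 0. If F(1) ≤ F(u) for all u > 0, then E[min(I(y·ξ(·),·), H(·))·ξ(·)] = z. -/

import Mathlib

open MeasureTheory Set Filter
open scoped ENNReal NNReal Topology

/-- The convex dual `Ũ(y) := sup_{0 ≤ z ≤ H} (U(z) − y·z)` (for a fixed state). -/
noncomputable def dualU (U : ℝ → ℝ) (H y : ℝ) : ℝ :=
  sSup ((fun z => U z - y * z) '' Set.Icc 0 H)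

/-- `min(I(y), H)`, where `I(y) := inf{ z ∈ (0,H) : U'(z) < y }` with the
conventions `inf ∅ = +∞` and `I(0) = +∞` (so that the minimum with `H`
equals `H` in those cases). -/
noncomputable def IminU (U : ℝ → ℝ) (H y : ℝ) : ℝ :=
  sInf ({z | z ∈ Set.Ioo 0 H ∧ deriv U z < y} ∪ {H})

section PerOmega

variable {U : ℝ → ℝ} {H : ℝ}

lemma Sne (c : ℝ) : ({z | z ∈ Set.Ioo 0 H ∧ deriv U z < c} ∪ {H}).Nonempty :=
  ⟨H, Or.inr rfl⟩

lemma Sbdd (hH : 0 < H) (c : ℝ) :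
    BddBelow ({z | z ∈ Set.Ioo 0 H ∧ deriv U z < c} ∪ {H}) := by
  refine ⟨0, ?_⟩
  rintro t (⟨ht, _⟩ | rfl)
  · exact ht.1.le
  · exact hH.le

lemma IminU_mem (hH : 0 < H) (c : ℝ) : IminU U H c ∈ Set.Icc 0 H := by
  constructor
  · refine le_csInf (Sne c) ?_
    rintro t (⟨ht, _⟩ | rfl)
    · exact ht.1.le
    · exact hH.le
  · exact csInf_le (Sbdd hH c) (Or.inr rfl)

variable (hH : 0 < H) (hconc : StrictConcaveOn ℝ (Set.Ioo 0 H) U)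
  (hdiff : ∀ z ∈ Set.Ioo 0 H, DifferentiableAt ℝ U z)

include hconc hdiff in
lemma S_upclosed {c w zz : ℝ} (hw : w ∈ Set.Ioo 0 H ∧ deriv U w < c)
    (hwz : w < zz) (hzH : zz < H) : zz ∈ Set.Ioo 0 H ∧ deriv U zz < c := by
  have hz : zz ∈ Set.Ioo 0 H := ⟨hw.1.1.trans hwz, hzH⟩
  exact ⟨hz, ((hconc.strictAntiOn_deriv hdiff) hw.1 hz hwz).trans hw.2⟩

include hconc hdiff in
lemma deriv_lt_of_gt_IminU {c zz : ℝ} (hz : zz ∈ Set.Ioo (IminU U H c) H) :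
    deriv U zz < c := by
  obtain ⟨w, hw, hwz⟩ := exists_lt_of_csInf_lt (Sne c) hz.1
  rcases hw with hw | rfl
  · exact (S_upclosed hconc hdiff hw hwz hz.2).2
  · exact absurd hwz (lt_asymm hz.2)

include hH in
lemma le_deriv_of_lt_IminU {c zz : ℝ} (hz : zz ∈ Set.Ioo 0 (IminU U H c)) :
    c ≤ deriv U zz := by
  by_contra hlt
  push_neg at hlt
  have hzH : zz < H := lt_of_lt_of_le hz.2 (IminU_mem hH c).2
  have : IminU U H c ≤ zz := csInf_le (Sbdd hH c) (Or.inl ⟨⟨hz.1, hzH⟩, hlt⟩)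
  exact absurd hz.2 (not_lt.2 this)

variable (hcont : ContinuousOn U (Set.Ici 0))

include hH hconc hdiff hcont in
/-- maximality of `IminU` for the function `w ↦ U w - c w` on `[0, H]`. -/
lemma IminU_max (c : ℝ) {w : ℝ} (hw : w ∈ Set.Icc 0 H) :
    U w - c * w ≤ U (IminU U H c) - c * (IminU U H c) := by
  set m := IminU U H c with hm
  have hm01 : m ∈ Set.Icc 0 H := IminU_mem hH c
  set f : ℝ → ℝ := fun w => U w - c * w with hf
  have hfc : ContinuousOn f (Set.Icc 0 H) := by
    refine ContinuousOn.sub (hcont.mono ?_) (Continuous.continuousOn (by fun_prop))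
    intro t ht; exact ht.1
  have hfderiv : ∀ x ∈ Set.Ioo 0 H, deriv f x = deriv U x - c := by
    intro x hx
    have h1 : DifferentiableAt ℝ U x := hdiff x hx
    have h2 : DifferentiableAt ℝ (fun w : ℝ => c * w) x := by fun_prop
    rw [hf]
    rw [deriv_fun_sub h1 h2]
    simp only [sub_right_inj]
    simpa using ((hasDerivAt_id x).const_mul c).deriv
  have hfdiff : ∀ x ∈ Set.Ioo 0 H, DifferentiableAt ℝ f x := by
    intro x hx
    exact (hdiff x hx).sub (by fun_prop)
  have mono1 : MonotoneOn f (Set.Icc 0 m) := by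
    apply monotoneOn_of_deriv_nonneg (convex_Icc 0 m)
      (hfc.mono (Set.Icc_subset_Icc le_rfl hm01.2))
    · rw [interior_Icc]
      intro x hx
      exact (hfdiff x ⟨hx.1, lt_of_lt_of_le hx.2 hm01.2⟩).differentiableWithinAt
    · rw [interior_Icc]
      intro x hx
      have hxH : x ∈ Set.Ioo 0 H := ⟨hx.1, lt_of_lt_of_le hx.2 hm01.2⟩
      rw [hfderiv x hxH]
      have := le_deriv_of_lt_IminU hH (c := c) ⟨hx.1, hx.2⟩
      linarith
  have anti1 : AntitoneOn f (Set.Icc m H) := by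
    apply antitoneOn_of_deriv_nonpos (convex_Icc m H)
      (hfc.mono (Set.Icc_subset_Icc hm01.1 le_rfl))
    · rw [interior_Icc]
      intro x hx
      exact (hfdiff x ⟨lt_of_le_of_lt hm01.1 hx.1, hx.2⟩).differentiableWithinAt
    · rw [interior_Icc]
      intro x hx
      have hxH : x ∈ Set.Ioo 0 H := ⟨lt_of_le_of_lt hm01.1 hx.1, hx.2⟩
      rw [hfderiv x hxH]
      have := deriv_lt_of_gt_IminU hconc hdiff (c := c) ⟨hx.1, hx.2⟩
      linarith
  rcases le_total w m with hwm | hmw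
  · exact mono1 ⟨hw.1, hwm⟩ ⟨hm01.1, le_rfl⟩ hwm
  · exact anti1 ⟨le_rfl, hm01.2⟩ ⟨hmw, hw.2⟩ hmw

include hH hconc hdiff hcont in
lemma dualU_eq (c : ℝ) :
    dualU U H c = U (IminU U H c) - c * (IminU U H c) := by
  have hm01 := IminU_mem (U := U) hH c
  apply le_antisymm
  · apply csSup_le
    · exact ⟨U (IminU U H c) - c * (IminU U H c), ⟨IminU U H c, hm01, rfl⟩⟩
    · rintro t ⟨w, hw, rfl⟩
      exact IminU_max hH hconc hdiff hcont c hw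
  · apply le_csSup
    · exact ⟨U (IminU U H c) - c * (IminU U H c),
        by rintro t ⟨w, hw, rfl⟩; exact IminU_max hH hconc hdiff hcont c hw⟩
    · exact ⟨IminU U H c, hm01, rfl⟩

include hH hconc hdiff hcont in
lemma dualU_subgrad (c b : ℝ) :
    U (IminU U H c) - b * (IminU U H c) ≤ dualU U H b := by
  apply le_csSup
  · exact ⟨U (IminU U H b) - b * (IminU U H b),
      by rintro t ⟨w, hw, rfl⟩; exact IminU_max hH hconc hdiff hcont b hw⟩
  · exact ⟨IminU U H c, IminU_mem hH c, rfl⟩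

include hH hconc hdiff hcont in
lemma dualU_diff_le (a a' : ℝ) :
    dualU U H a' - dualU U H a ≤ -(IminU U H a') * (a' - a) := by
  have h1 := dualU_eq hH hconc hdiff hcont a'
  have h2 := dualU_subgrad hH hconc hdiff hcont a' a
  nlinarith [h1, h2]

include hH hconc hdiff in
lemma IminU_eq_Tinf (c : ℝ) :
    IminU U H c = sInf ({z | z ∈ Set.Ioo 0 H ∧ deriv U z ≤ c} ∪ {H}) := by
  have hTbdd : BddBelow ({z | z ∈ Set.Ioo 0 H ∧ deriv U z ≤ c} ∪ {H}) := by
    refine ⟨0, ?_⟩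
    rintro t (⟨ht, _⟩ | rfl)
    · exact ht.1.le
    · exact hH.le
  apply le_antisymm
  · apply le_csInf ⟨H, Or.inr rfl⟩
    rintro t (⟨ht, htc⟩ | rfl)
    · -- show IminU ≤ t using: every z ∈ (t, H) is in S
      by_contra hlt
      push_neg at hlt
      obtain ⟨zz, hz1, hz2⟩ := exists_between (lt_min hlt ht.2)
      have hzH : zz < H := lt_of_lt_of_le hz2 (min_le_right _ _)
      have hzS : zz ∈ Set.Ioo 0 H ∧ deriv U zz < c := by
        have hz0 : zz ∈ Set.Ioo 0 H := ⟨ht.1.trans hz1, hzH⟩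
        exact ⟨hz0, lt_of_lt_of_le ((hconc.strictAntiOn_deriv hdiff) ht hz0 hz1) htc⟩
      have : IminU U H c ≤ zz := csInf_le (Sbdd hH c) (Or.inl hzS)
      exact absurd (lt_of_le_of_lt this (hz2.trans_le (min_le_left _ _)))
        (lt_irrefl _)
    · exact (IminU_mem hH c).2
  · apply csInf_le_csInf hTbdd (Sne c)
    rintro t (⟨ht, htc⟩ | rfl)
    · exact Or.inl ⟨ht, htc.le⟩
    · exact Or.inr rfl

include hH hconc hdiff in
lemma IminU_tendsto {a : ℝ} (b : ℕ → ℝ) (hb : Tendsto b atTop (𝓝 a)) :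
    Tendsto (fun n => IminU U H (b n)) atTop (𝓝 (IminU U H a)) := by
  rw [tendsto_order]
  constructor
  · -- x < IminU a → eventually x < IminU (b n)
    intro x hx
    obtain ⟨w, hw1, hw2⟩ := exists_between hx
    rcases le_or_gt w 0 with hw0 | hw0
    · filter_upwards with n
      exact lt_of_lt_of_le (lt_of_lt_of_le hw1 hw0) (IminU_mem hH (b n)).1
    · have hwH : w < H := lt_of_lt_of_le hw2 (IminU_mem hH a).2
      have hwIoo : w ∈ Set.Ioo 0 H := ⟨hw0, hwH⟩
      have hderiv : a < deriv U w := by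
        by_contra hle
        push_neg at hle
        have : IminU U H a ≤ w := by
          rw [IminU_eq_Tinf hH hconc hdiff]
          refine csInf_le ?_ (Or.inl ⟨hwIoo, hle⟩)
          refine ⟨0, ?_⟩
          rintro t (⟨ht, _⟩ | rfl)
          · exact ht.1.le
          · exact hH.le
        exact absurd hw2 (not_lt.2 this)
      filter_upwards [hb.eventually_lt_const hderiv] with n hn
      have : w ≤ IminU U H (b n) := by
        apply le_csInf (Sne (b n))
        rintro t (⟨ht, htc⟩ | rfl)
        · by_contra htw
          push_neg at htw
          have := (hconc.strictAntiOn_deriv hdiff) ht hwIoo htw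
          exact absurd (htc.trans (hn.trans this)) (lt_irrefl _)
        · exact hwH.le
      exact lt_of_lt_of_le hw1 this
  · -- IminU a < x → eventually IminU (b n) < x
    intro x hx
    rcases lt_or_ge (IminU U H a) H with hmH | hmH
    · obtain ⟨w, hw1, hw2⟩ := exists_between (lt_min hx hmH)
      have hwH : w < H := lt_of_lt_of_le hw2 (min_le_right _ _)
      have hwx : w < x := lt_of_lt_of_le hw2 (min_le_left _ _)
      have hderiv : deriv U w < a :=
        deriv_lt_of_gt_IminU hconc hdiff ⟨hw1, hwH⟩
      filter_upwards [hb.eventually_const_lt hderiv] with n hn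
      have hw0 : 0 < w := lt_of_le_of_lt (IminU_mem hH a).1 hw1
      have : IminU U H (b n) ≤ w := csInf_le (Sbdd hH (b n)) (Or.inl ⟨⟨hw0, hwH⟩, hn⟩)
      exact lt_of_le_of_lt this hwx
    · have heq : IminU U H a = H := le_antisymm (IminU_mem hH a).2 hmH
      filter_upwards with n
      exact lt_of_le_of_lt ((IminU_mem hH (b n)).2.trans_eq heq.symm) hx


include hH hconc hdiff in
lemma IminU_eq_iInf (c : ℝ) (q : ℕ → ℚ) (hq : Function.Surjective q) :
    IminU U H c = ⨅ n, (if (((q n : ℝ)) ∈ Set.Ioo 0 H ∧ deriv U ((q n : ℝ)) < c)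
      then ((q n : ℝ)) else H) := by
  classical
  set f : ℕ → ℝ := fun n => if (((q n : ℝ)) ∈ Set.Ioo 0 H ∧ deriv U ((q n : ℝ)) < c)
      then ((q n : ℝ)) else H with hf
  have hfA : ∀ n, f n ∈ ({z | z ∈ Set.Ioo 0 H ∧ deriv U z < c} ∪ {H}) := by
    intro n
    by_cases h : ((q n : ℝ)) ∈ Set.Ioo 0 H ∧ deriv U ((q n : ℝ)) < c
    · rw [hf]; simp only [h, if_true]; exact Or.inl h
    · rw [hf]; simp only [h, if_false]; exact Or.inr rfl
  have hfH : ∀ n, f n ≤ H := by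
    intro n
    by_cases h : ((q n : ℝ)) ∈ Set.Ioo 0 H ∧ deriv U ((q n : ℝ)) < c
    · rw [hf]; simp only [h, if_true]; exact h.1.2.le
    · rw [hf]; simp only [h, if_false]; exact le_rfl
  have hf0 : ∀ n, 0 ≤ f n := by
    intro n
    by_cases h : ((q n : ℝ)) ∈ Set.Ioo 0 H ∧ deriv U ((q n : ℝ)) < c
    · rw [hf]; simp only [h, if_true]; exact h.1.1.le
    · rw [hf]; simp only [h, if_false]; exact hH.le
  have hbddr : BddBelow (Set.range f) := ⟨0, by rintro t ⟨n, rfl⟩; exact hf0 n⟩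
  apply le_antisymm
  · exact le_ciInf fun n => csInf_le (Sbdd hH c) (hfA n)
  · apply le_csInf (Sne c)
    rintro t (⟨ht, htc⟩ | rfl)
    · by_contra hlt
      push_neg at hlt
      obtain ⟨zz, hz1, hz2⟩ := exists_between (lt_min hlt ht.2)
      obtain ⟨qq, hq1, hq2⟩ := exists_rat_btwn hz1
      obtain ⟨n, rfl⟩ := hq qq
      have hzH : zz < H := lt_of_lt_of_le hz2 (min_le_right _ _)
      have hqS : ((q n : ℝ)) ∈ Set.Ioo 0 H ∧ deriv U ((q n : ℝ)) < c :=
        S_upclosed hconc hdiff ⟨ht, htc⟩ hq1 (hq2.trans hzH)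
      have hfn : f n = ((q n : ℝ)) := if_pos hqS
      have h1 : (⨅ n, f n) ≤ f n := ciInf_le hbddr n
      rw [hfn] at h1
      have h2 : zz < ⨅ n, f n := lt_of_lt_of_le hz2 (min_le_left _ _)
      linarith [lt_trans hq2 h2]
    · exact (ciInf_le hbddr 0).trans (hfH 0)

end PerOmega
section Meas

variable {Ω : Type*} [MeasurableSpace Ω]

lemma meas_comp_int {G : Ω → ℤ → ℝ} (hG : ∀ j, Measurable fun ω => G ω j)
    {h : Ω → ℤ} (hh : Measurable h) : Measurable fun ω => G ω (h ω) := by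
  intro t ht
  have : (fun ω => G ω (h ω)) ⁻¹' t = ⋃ j : ℤ, (h ⁻¹' {j}) ∩ ((fun ω => G ω j) ⁻¹' t) := by
    ext ω
    simp only [Set.mem_preimage, Set.mem_iUnion, Set.mem_inter_iff, Set.mem_singleton_iff]
    constructor
    · intro hmem; exact ⟨h ω, rfl, hmem⟩
    · rintro ⟨j, rfl, hmem⟩; exact hmem
  rw [this]
  exact MeasurableSet.iUnion fun j => (hh (measurableSet_singleton j)).inter (hG j ht)

lemma meas_comp_cont (U : Ω → ℝ → ℝ) (hUmeas : ∀ z, Measurable fun ω => U ω z)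
    (hUcont : ∀ ω, ContinuousOn (U ω) (Set.Ici 0)) {m : Ω → ℝ} (hm : Measurable m)
    (hm0 : ∀ ω, 0 ≤ m ω) : Measurable fun ω => U ω (m ω) := by
  have key : ∀ k : ℕ, Measurable fun ω => U ω ((⌊m ω * ((k:ℝ)+1)⌋ : ℤ) / ((k:ℝ)+1)) := by
    intro k
    exact meas_comp_int (G := fun ω j => U ω ((j : ℝ) / ((k:ℝ)+1)))
      (fun j => hUmeas _) ((hm.mul measurable_const).floor)
  apply measurable_of_tendsto_metrizable'
    (u := atTop) (f := fun (k:ℕ) ω => U ω ((⌊m ω * ((k:ℝ)+1)⌋ : ℤ) / ((k:ℝ)+1))) key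
  rw [tendsto_pi_nhds]
  intro ω
  set r : ℕ → ℝ := fun (k:ℕ) => (⌊m ω * ((k:ℝ)+1)⌋ : ℤ) / ((k:ℝ)+1) with hr
  have hk1 : ∀ k : ℕ, (0:ℝ) < (k:ℝ)+1 := fun k => by positivity
  have hrub : ∀ k : ℕ, r k ≤ m ω := by
    intro k
    rw [hr, div_le_iff₀ (hk1 k)]
    exact (Int.floor_le _).trans (by rw [mul_comm])|>.trans_eq (by ring)
  have hrlb : ∀ k : ℕ, m ω - 1/((k:ℝ)+1) ≤ r k := by
    intro k
    rw [hr, le_div_iff₀ (hk1 k)]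
    have h4 := Int.sub_one_lt_floor (m ω * ((k:ℝ)+1))
    have h3 : (1/((k:ℝ)+1)) * ((k:ℝ)+1) = 1 := by field_simp
    nlinarith [h4, h3]
  have hrt : Tendsto r atTop (𝓝 (m ω)) := by
    have h1 : Tendsto (fun k : ℕ => m ω - 1/((k:ℝ)+1)) atTop (𝓝 (m ω)) := by
      have := tendsto_one_div_add_atTop_nhds_zero_nat (𝕜 := ℝ)
      have h2 := Tendsto.const_sub (m ω) this
      simpa using h2
    exact tendsto_of_tendsto_of_tendsto_of_le_of_le h1 tendsto_const_nhds hrlb hrub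
  have hr0 : ∀ k : ℕ, 0 ≤ r k := by
    intro k
    apply div_nonneg _ (hk1 k).le
    exact_mod_cast Int.floor_nonneg.2 (mul_nonneg (hm0 ω) (by positivity))
  have hc : ContinuousWithinAt (U ω) (Set.Ici 0) (m ω) := (hUcont ω) _ (hm0 ω)
  exact hc.tendsto.comp (tendsto_nhdsWithin_of_tendsto_nhds_of_eventually_within r hrt
    (Filter.Eventually.of_forall hr0))

variable (U : Ω → ℝ → ℝ) (H : Ω → ℝ)
variable (hHmeas : Measurable H) (hHpos : ∀ ω, 0 < H ω)
  (hUmeas : ∀ z, Measurable fun ω => U ω z)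
  (hUdiff : ∀ ω, ∀ z ∈ Set.Ioo 0 (H ω), DifferentiableAt ℝ (U ω) z)

include hHmeas hUmeas hUdiff in
lemma meas_derivq (q : ℝ) :
    Measurable fun ω => if q ∈ Set.Ioo 0 (H ω) then deriv (U ω) q else 0 := by
  have hset : MeasurableSet {ω | q ∈ Set.Ioo 0 (H ω)} := by
    have : {ω | q ∈ Set.Ioo 0 (H ω)} = {ω | 0 < q} ∩ {ω | q < H ω} := by
      ext ω; simp only [Set.mem_Ioo, Set.mem_setOf_eq, Set.mem_inter_iff]
    rw [this]
    exact (MeasurableSet.const _).inter (measurableSet_lt measurable_const hHmeas)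
  have hg : ∀ k : ℕ, Measurable fun ω =>
      if q ∈ Set.Ioo 0 (H ω) then ((k:ℝ)+1) * (U ω (q + 1/((k:ℝ)+1)) - U ω q) else 0 := by
    intro k
    exact Measurable.ite hset ((measurable_const.mul ((hUmeas _).sub (hUmeas _)))) measurable_const
  apply measurable_of_tendsto_metrizable' (u := atTop) hg
  rw [tendsto_pi_nhds]
  intro ω
  by_cases hmem : q ∈ Set.Ioo 0 (H ω)
  · simp only [hmem, if_true]
    have hd : HasDerivAt (U ω) (deriv (U ω) q) q := (hUdiff ω q hmem).hasDerivAt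
    have hslope := hasDerivAt_iff_tendsto_slope.1 hd
    have hseq : Tendsto (fun k : ℕ => q + 1/((k:ℝ)+1)) atTop (𝓝[≠] q) := by
      apply tendsto_nhdsWithin_of_tendsto_nhds_of_eventually_within
      · have := tendsto_one_div_add_atTop_nhds_zero_nat (𝕜 := ℝ)
        have h2 := Tendsto.const_add q this
        simpa using h2
      · filter_upwards with k
        have : (0:ℝ) < 1/((k:ℝ)+1) := by positivity
        simp only [Set.mem_compl_iff, Set.mem_singleton_iff]
        intro h
        nlinarith [this, h]
    have := hslope.comp hseq
    convert this using 2 with k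
    rw [Function.comp_apply, slope_def_field]
    field_simp
    ring
  · simp only [hmem, if_false]
    exact tendsto_const_nhds

end Meas

section Glue

variable {Ω : Type*} [MeasurableSpace Ω]
variable (U : Ω → ℝ → ℝ) (H : Ω → ℝ)
variable (hHmeas : Measurable H) (hHpos : ∀ ω, 0 < H ω)
  (hUmeas : ∀ z, Measurable fun ω => U ω z)
  (hUcont : ∀ ω, ContinuousOn (U ω) (Set.Ici 0))
  (hUconc : ∀ ω, StrictConcaveOn ℝ (Set.Ioo 0 (H ω)) (U ω))
  (hUdiff : ∀ ω, ∀ z ∈ Set.Ioo 0 (H ω), DifferentiableAt ℝ (U ω) z)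

include hHmeas in
lemma measq_set (q : ℝ) : MeasurableSet {ω | q ∈ Set.Ioo 0 (H ω)} := by
  have : {ω | q ∈ Set.Ioo 0 (H ω)} = {ω | 0 < q} ∩ {ω | q < H ω} := by
    ext ω; simp only [Set.mem_Ioo, Set.mem_setOf_eq, Set.mem_inter_iff]
  rw [this]
  exact (MeasurableSet.const _).inter (measurableSet_lt measurable_const hHmeas)

include hHmeas hHpos hUmeas hUconc hUdiff in
lemma meas_IminU (c : Ω → ℝ) (hc : Measurable c) :
    Measurable fun ω => IminU (U ω) (H ω) (c ω) := by
  classical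
  obtain ⟨q, hq⟩ := exists_surjective_nat ℚ
  have heq : (fun ω => IminU (U ω) (H ω) (c ω))
      = fun ω => ⨅ n, (if (((q n : ℝ)) ∈ Set.Ioo 0 (H ω) ∧ deriv (U ω) ((q n : ℝ)) < c ω)
          then ((q n : ℝ)) else H ω) :=
    funext fun ω => IminU_eq_iInf (hHpos ω) (hUconc ω) (hUdiff ω) (c ω) q hq
  rw [heq]
  apply Measurable.iInf
  intro n
  have hD := meas_derivq U H hHmeas hUmeas hUdiff ((q n : ℝ))
  have hset : MeasurableSet {ω | ((q n : ℝ)) ∈ Set.Ioo 0 (H ω) ∧ deriv (U ω) ((q n : ℝ)) < c ω} := by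
    have : {ω | ((q n : ℝ)) ∈ Set.Ioo 0 (H ω) ∧ deriv (U ω) ((q n : ℝ)) < c ω}
        = {ω | ((q n : ℝ)) ∈ Set.Ioo 0 (H ω)} ∩
          {ω | (if ((q n : ℝ)) ∈ Set.Ioo 0 (H ω) then deriv (U ω) ((q n : ℝ)) else 0) < c ω} := by
      ext ω
      simp only [Set.mem_setOf_eq, Set.mem_inter_iff]
      constructor
      · rintro ⟨h1, h2⟩
        refine ⟨h1, ?_⟩
        rwa [if_pos h1]
      · rintro ⟨h1, h2⟩
        rw [if_pos h1] at h2
        exact ⟨h1, h2⟩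
    rw [this]
    exact (measq_set H hHmeas _).inter (measurableSet_lt hD hc)
  exact Measurable.ite hset measurable_const hHmeas

include hHmeas hHpos hUmeas hUcont hUconc hUdiff in
lemma meas_dualU (c : Ω → ℝ) (hc : Measurable c) :
    Measurable fun ω => dualU (U ω) (H ω) (c ω) := by
  have hMm : Measurable fun ω => IminU (U ω) (H ω) (c ω) :=
    meas_IminU U H hHmeas hHpos hUmeas hUconc hUdiff c hc
  have heq : (fun ω => dualU (U ω) (H ω) (c ω))
      = fun ω => U ω (IminU (U ω) (H ω) (c ω)) - c ω * IminU (U ω) (H ω) (c ω) :=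
    funext fun ω => dualU_eq (hHpos ω) (hUconc ω) (hUdiff ω) (hUcont ω) (c ω)
  rw [heq]
  exact (meas_comp_cont U hUmeas hUcont hMm (fun ω => (IminU_mem (hHpos ω) _).1)).sub (hc.mul hMm)

end Glue

/-- First-order condition for the dual problem: if `u ↦ F(u) := u·y·z +
E[Ũ(u·y·ξ(·),·)]` attains its minimum over `(0,∞)` at `u = 1`, then
`E[min(I(y·ξ(·),·), H(·))·ξ(·)] = z`. -/
theorem stmt11 {Ω : Type*} [MeasurableSpace Ω] (μ : Measure Ω) [IsProbabilityMeasure μ]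
    (H : Ω → ℝ) (hHmeas : Measurable H) (hHpos : ∀ ω, 0 < H ω)
    (U : Ω → ℝ → ℝ)
    (hU0 : ∀ ω, ∀ z, 0 ≤ z → 0 ≤ U ω z)
    (hUmono : ∀ ω, MonotoneOn (U ω) (Set.Ici 0))
    (hUcont : ∀ ω, ContinuousOn (U ω) (Set.Ici 0))
    (hUconc : ∀ ω, StrictConcaveOn ℝ (Set.Ioo 0 (H ω)) (U ω))
    (hUdiff : ∀ ω, ∀ z ∈ Set.Ioo 0 (H ω), DifferentiableAt ℝ (U ω) z)
    (hUcap : ∀ ω, ∀ w, 0 ≤ w → U ω w = U ω (min w (H ω)))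
    (hUmeas : ∀ z, Measurable fun ω => U ω z)
    (hUint : Integrable (fun ω => U ω (H ω)) μ)
    (y : ℝ) (hy : 0 < y) (z : ℝ)
    (ξ : Ω → ℝ) (hξmeas : Measurable ξ) (hξpos : ∀ ω, 0 ≤ ξ ω)
    (hξHint : Integrable (fun ω => ξ ω * H ω) μ)
    (hmin : ∀ u : ℝ, 0 < u →
      1 * y * z + (∫ ω, dualU (U ω) (H ω) (1 * y * ξ ω) ∂μ) ≤
        u * y * z + ∫ ω, dualU (U ω) (H ω) (u * y * ξ ω) ∂μ) :
    (∫ ω, IminU (U ω) (H ω) (y * ξ ω) * ξ ω ∂μ) = z := by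
  classical
  have measIm : ∀ cc : ℝ, Measurable fun ω => IminU (U ω) (H ω) (cc * ξ ω) := fun cc =>
    meas_IminU U H hHmeas hHpos hUmeas hUconc hUdiff _ (measurable_const.mul hξmeas)
  have Im_mem : ∀ ω (a : ℝ), IminU (U ω) (H ω) a ∈ Set.Icc 0 (H ω) :=
    fun ω a => IminU_mem (hHpos ω) a
  have intg : ∀ cc : ℝ, Integrable (fun ω => IminU (U ω) (H ω) (cc * ξ ω) * ξ ω) μ := by
    intro cc
    apply Integrable.mono' hξHint (((measIm cc).mul hξmeas).aestronglyMeasurable)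
    filter_upwards with ω
    simp only [Pi.mul_apply]
    rw [Real.norm_eq_abs, abs_of_nonneg (mul_nonneg (Im_mem ω _).1 (hξpos ω))]
    calc IminU (U ω) (H ω) (cc * ξ ω) * ξ ω ≤ H ω * ξ ω :=
          mul_le_mul_of_nonneg_right (Im_mem ω _).2 (hξpos ω)
      _ = ξ ω * H ω := mul_comm _ _
  have intdual : ∀ cc : ℝ, 0 ≤ cc → Integrable (fun ω => dualU (U ω) (H ω) (cc * ξ ω)) μ := by
    intro cc hcc
    have hmeasd : Measurable fun ω => dualU (U ω) (H ω) (cc * ξ ω) :=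
      meas_dualU U H hHmeas hHpos hUmeas hUcont hUconc hUdiff _ (measurable_const.mul hξmeas)
    apply Integrable.mono' hUint hmeasd.aestronglyMeasurable
    filter_upwards with ω
    have heq := dualU_eq (hHpos ω) (hUconc ω) (hUdiff ω) (hUcont ω) (cc * ξ ω)
    have hmem := Im_mem ω (cc * ξ ω)
    have ha : 0 ≤ cc * ξ ω := mul_nonneg hcc (hξpos ω)
    have h1 : 0 ≤ dualU (U ω) (H ω) (cc * ξ ω) := by
      have h0 := IminU_max (hHpos ω) (hUconc ω) (hUdiff ω) (hUcont ω) (cc * ξ ω)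
        (w := 0) ⟨le_rfl, (hHpos ω).le⟩
      rw [heq]
      have := hU0 ω 0 le_rfl
      nlinarith
    have h2 : dualU (U ω) (H ω) (cc * ξ ω) ≤ U ω (H ω) := by
      rw [heq]
      have hUm : U ω (IminU (U ω) (H ω) (cc * ξ ω)) ≤ U ω (H ω) :=
        hUmono ω hmem.1 (hHpos ω).le hmem.2
      nlinarith [mul_nonneg ha hmem.1]
    rw [Real.norm_eq_abs, abs_of_nonneg h1]
    exact h2
  have key : ∀ u : ℝ, 0 < u →
      0 ≤ (u - 1) * y * (z - ∫ ω, IminU (U ω) (H ω) (u * y * ξ ω) * ξ ω ∂μ) := by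
    intro u hu
    have h := hmin u hu
    simp only [one_mul] at h
    have hint1 := intdual y hy.le
    have hintu := intdual (u * y) (by positivity)
    have hint1' : Integrable (fun ω => dualU (U ω) (H ω) (y * ξ ω)) μ := hint1
    have hintu' : Integrable (fun ω => dualU (U ω) (H ω) (u * y * ξ ω)) μ := hintu
    have hsub : (∫ ω, (dualU (U ω) (H ω) (u * y * ξ ω) - dualU (U ω) (H ω) (y * ξ ω)) ∂μ)
        = (∫ ω, dualU (U ω) (H ω) (u * y * ξ ω) ∂μ) - ∫ ω, dualU (U ω) (H ω) (y * ξ ω) ∂μ :=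
      integral_sub hintu' hint1'
    have hmono : (∫ ω, (dualU (U ω) (H ω) (u * y * ξ ω) - dualU (U ω) (H ω) (y * ξ ω)) ∂μ)
        ≤ ∫ ω, (-(u - 1) * y) * (IminU (U ω) (H ω) (u * y * ξ ω) * ξ ω) ∂μ := by
      apply integral_mono (hintu'.sub hint1') ((intg (u * y)).const_mul _)
      intro ω
      have hpt := dualU_diff_le (hHpos ω) (hUconc ω) (hUdiff ω) (hUcont ω)
        (y * ξ ω) (u * y * ξ ω)
      exact hpt.trans_eq (by ring)
    have hconst : (∫ ω, (-(u - 1) * y) * (IminU (U ω) (H ω) (u * y * ξ ω) * ξ ω) ∂μ)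
        = (-(u - 1) * y) * ∫ ω, IminU (U ω) (H ω) (u * y * ξ ω) * ξ ω ∂μ :=
      integral_const_mul _ _
    rw [hconst] at hmono
    rw [hsub] at hmono
    nlinarith [h, hmono]
  have tendint : ∀ (v : ℕ → ℝ), Tendsto v atTop (𝓝 1) →
      Tendsto (fun n => ∫ ω, IminU (U ω) (H ω) (v n * y * ξ ω) * ξ ω ∂μ) atTop
        (𝓝 (∫ ω, IminU (U ω) (H ω) (y * ξ ω) * ξ ω ∂μ)) := by
    intro v hv1
    apply tendsto_integral_of_dominated_convergence (bound := fun ω => ξ ω * H ω)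
    · intro n
      exact ((measIm (v n * y)).mul hξmeas).aestronglyMeasurable
    · exact hξHint
    · intro n
      filter_upwards with ω
      rw [Real.norm_eq_abs, abs_of_nonneg (mul_nonneg (Im_mem ω _).1 (hξpos ω))]
      calc IminU (U ω) (H ω) (v n * y * ξ ω) * ξ ω ≤ H ω * ξ ω :=
            mul_le_mul_of_nonneg_right (Im_mem ω _).2 (hξpos ω)
        _ = ξ ω * H ω := mul_comm _ _
    · filter_upwards with ω
      have hbt : Tendsto (fun n => v n * y * ξ ω) atTop (𝓝 (y * ξ ω)) := by
        have := (hv1.mul_const y).mul_const (ξ ω)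
        simpa using this
      have := IminU_tendsto (hHpos ω) (hUconc ω) (hUdiff ω) (fun n => v n * y * ξ ω) hbt
      exact this.mul_const (ξ ω)
  have hub : (∫ ω, IminU (U ω) (H ω) (y * ξ ω) * ξ ω ∂μ) ≤ z := by
    have hv1 : Tendsto (fun n : ℕ => 1 + 1 / ((n : ℝ) + 1)) atTop (𝓝 1) := by
      have h2 := (tendsto_one_div_add_atTop_nhds_zero_nat (𝕜 := ℝ)).const_add (1 : ℝ)
      simpa using h2
    apply le_of_tendsto (tendint _ hv1)
    filter_upwards with n
    have hd : (0:ℝ) < 1 / ((n : ℝ) + 1) := by positivity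
    have hkey := key (1 + 1 / ((n : ℝ) + 1)) (by linarith)
    have hfac : (0:ℝ) < (1 + 1 / ((n : ℝ) + 1) - 1) * y := mul_pos (by linarith) hy
    nlinarith [hkey, hfac]
  have hlb : z ≤ ∫ ω, IminU (U ω) (H ω) (y * ξ ω) * ξ ω ∂μ := by
    have hv0 : Tendsto (fun n : ℕ => 1 / ((n : ℝ) + 2)) atTop (𝓝 0) := by
      apply tendsto_of_tendsto_of_tendsto_of_le_of_le tendsto_const_nhds
        tendsto_one_div_add_atTop_nhds_zero_nat
      · intro n; positivity
      · intro n
        have h1 : (0:ℝ) < (n:ℝ) + 1 := by positivity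
        exact one_div_le_one_div_of_le h1 (by linarith)
    have hv1 : Tendsto (fun n : ℕ => 1 - 1 / ((n : ℝ) + 2)) atTop (𝓝 1) := by
      have h2 := hv0.const_sub (1:ℝ)
      simpa using h2
    apply ge_of_tendsto (tendint _ hv1)
    filter_upwards with n
    have hn : (0:ℝ) ≤ (n:ℝ) := n.cast_nonneg
    have h1 : 1 / ((n:ℝ) + 2) ≤ 1/2 := one_div_le_one_div_of_le (by norm_num) (by linarith)
    have hd : (0:ℝ) < 1 / ((n : ℝ) + 2) := by positivity
    have hkey := key (1 - 1 / ((n : ℝ) + 2)) (by linarith)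
    have hfac : (1 - 1 / ((n : ℝ) + 2) - 1) * y < 0 := mul_neg_of_neg_of_pos (by linarith) hy
    nlinarith [hkey, hfac]
  linarith
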